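/- For every L ≥ 2, all real parameters λ, κ, Δ_t, a, b, c and all real couplings h₁,…,h_L and J₁,…,J_L, the Hamiltonian H(λ,κ) = λ Σ_{i=1}^{L} [(1−κ) h_i ((S^z)²)_i + κ J_i (S^z ⊗ S^z)_{i,i+1}] + Δ_t Σ_{i=1}^{L} [ a((S^+)²⊗(S^−)² + (S^−)²⊗(S^+)² + h.c.)_{i,i+1} + b((S^+S^z)⊗(S^−S^z) + (S^−S^z)⊗(S^+S^z) + h.c.)_{i,i+1} + c((S^+)²⊗(S^+S^z) + (S^−)²⊗(S^−S^z) + h.c.)_{i,i+1} ] on (ℂ³)^{⊗L} with periodic boundary conditions satisfies U(g) H(λ,κ) U(g)* = H(λ,κ) for U(g) = V(g)^{⊗L} with g = a and g = x, and hence for all g ∈ S₃. -/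

import Mathlib

open Matrix Complex Finset
open scoped Kronecker

noncomputable section

def ω : ℂ := Complex.exp (2 * Real.pi * Complex.I / 3)

def Va : Matrix (Fin 3) (Fin 3) ℂ := !![ω, 0, 0; 0, 1, 0; 0, 0, (starRingEnd ℂ) ω]

def Vx : Matrix (Fin 3) (Fin 3) ℂ := !![0, 0, 1; 0, -1, 0; 1, 0, 0]

def Sz : Matrix (Fin 3) (Fin 3) ℂ := !![1, 0, 0; 0, 0, 0; 0, 0, -1]

def Sx : Matrix (Fin 3) (Fin 3) ℂ :=
  ((Real.sqrt 2 : ℂ))⁻¹ • !![0, 1, 0; 1, 0, 1; 0, 1, 0]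

def Sy : Matrix (Fin 3) (Fin 3) ℂ :=
  ((Real.sqrt 2 : ℂ))⁻¹ • !![0, -Complex.I, 0; Complex.I, 0, -Complex.I; 0, Complex.I, 0]

def Sp : Matrix (Fin 3) (Fin 3) ℂ := ((Real.sqrt 2 : ℂ))⁻¹ • (Sx + Complex.I • Sy)

def Sm : Matrix (Fin 3) (Fin 3) ℂ := ((Real.sqrt 2 : ℂ))⁻¹ • (Sx - Complex.I • Sy)

/-- The site following `i` with periodic boundary conditions. -/
def nextSite {L : ℕ} (i : Fin L) : Fin L := ⟨(i + 1) % L, Nat.mod_lt _ i.pos⟩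

/-- `V^{⊗L}` acting on `(ℂ³)^{⊗L}`, realized as matrices indexed by `Fin L → Fin 3`. -/
def kronPow (L : ℕ) (V : Matrix (Fin 3) (Fin 3) ℂ) :
    Matrix (Fin L → Fin 3) (Fin L → Fin 3) ℂ :=
  fun f g => ∏ i, V (f i) (g i)

/-- `M_i`: one-site operator `M` on the `i`-th tensor factor, identity elsewhere. -/
def embed1 (L : ℕ) (M : Matrix (Fin 3) (Fin 3) ℂ) (i : Fin L) :
    Matrix (Fin L → Fin 3) (Fin L → Fin 3) ℂ :=
  fun f g => M (f i) (g i) * ∏ j ∈ Finset.univ \ {i}, (if f j = g j then (1 : ℂ) else 0)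

/-- `K_{i,i+1}`: two-site operator `K` on tensor factors `i`, `i+1` (periodic),
identity elsewhere. -/
def embed2 (L : ℕ) (K : Matrix (Fin 3 × Fin 3) (Fin 3 × Fin 3) ℂ) (i : Fin L) :
    Matrix (Fin L → Fin 3) (Fin L → Fin 3) ℂ :=
  fun f g => K (f i, f (nextSite i)) (g i, g (nextSite i)) *
    ∏ j ∈ Finset.univ \ {i, nextSite i}, (if f j = g j then (1 : ℂ) else 0)

/-- Two-site block `(S⁺)²⊗(S⁻)² + (S⁻)²⊗(S⁺)²` (to which h.c. is added below). -/
def Ta : Matrix (Fin 3 × Fin 3) (Fin 3 × Fin 3) ℂ :=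
  (Sp * Sp) ⊗ₖ (Sm * Sm) + (Sm * Sm) ⊗ₖ (Sp * Sp)

/-- Two-site block `(S⁺Sᶻ)⊗(S⁻Sᶻ) + (S⁻Sᶻ)⊗(S⁺Sᶻ)` (to which h.c. is added below). -/
def Tb : Matrix (Fin 3 × Fin 3) (Fin 3 × Fin 3) ℂ :=
  (Sp * Sz) ⊗ₖ (Sm * Sz) + (Sm * Sz) ⊗ₖ (Sp * Sz)

/-- Two-site block `(S⁺)²⊗(S⁺Sᶻ) + (S⁻)²⊗(S⁻Sᶻ)` (to which h.c. is added below). -/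
def Tc : Matrix (Fin 3 × Fin 3) (Fin 3 × Fin 3) ℂ :=
  (Sp * Sp) ⊗ₖ (Sp * Sz) + (Sm * Sm) ⊗ₖ (Sm * Sz)

/-- The model Hamiltonian `H(λ,κ)` of Eq. (5) on `(ℂ³)^{⊗L}` with periodic boundary
conditions. -/
def Hmodel (L : ℕ) (lam kap Δt a b c : ℝ) (h J : Fin L → ℝ) :
    Matrix (Fin L → Fin 3) (Fin L → Fin 3) ℂ :=
  (lam : ℂ) • (∑ i : Fin L,
      ((((1 - kap) * h i : ℝ) : ℂ) • embed1 L (Sz * Sz) i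
        + ((kap * J i : ℝ) : ℂ) • embed2 L (Sz ⊗ₖ Sz) i))
  + (Δt : ℂ) • (∑ i : Fin L,
      ((a : ℂ) • embed2 L (Ta + Taᴴ) i
        + (b : ℂ) • embed2 L (Tb + Tbᴴ) i
        + (c : ℂ) • embed2 L (Tc + Tcᴴ) i))

/-! ### Auxiliary lemmas -/

set_option maxRecDepth 8000

section Aux

lemma sqrt2_sq : ((Real.sqrt 2 : ℝ) : ℂ) * ((Real.sqrt 2 : ℝ) : ℂ) = 2 := by
  norm_cast
  rw [Real.mul_self_sqrt (by norm_num : (0:ℝ) ≤ 2)]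

lemma Sp_eq : Sp = !![0, 1, 0; 0, 0, 1; 0, 0, 0] := by
  ext i j
  fin_cases i <;> fin_cases j <;>
    simp [Sp, Sx, Sy, Matrix.smul_apply, Matrix.add_apply, Matrix.vecHead, Matrix.vecTail] <;>
    field_simp <;> simp only [sq, sqrt2_sq, Complex.I_mul_I, mul_zero] <;> ring

lemma Sm_eq : Sm = !![0, 0, 0; 1, 0, 0; 0, 1, 0] := by
  ext i j
  fin_cases i <;> fin_cases j <;>
    simp [Sm, Sx, Sy, Matrix.smul_apply, Matrix.sub_apply, Matrix.vecHead, Matrix.vecTail] <;>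
    field_simp <;> simp only [sq, sqrt2_sq, Complex.I_mul_I, mul_zero] <;> ring

lemma omega_mul_conj : ω * (starRingEnd ℂ) ω = 1 := by
  rw [ω, ← Complex.exp_conj, ← Complex.exp_add]
  have : (2 * Real.pi * Complex.I / 3) + (starRingEnd ℂ) (2 * Real.pi * Complex.I / 3) = 0 := by
    simp [map_div₀, _root_.map_mul, Complex.conj_I, Complex.conj_ofReal, map_ofNat]
    ring
  rw [this, Complex.exp_zero]

lemma conj_mul_omega : (starRingEnd ℂ) ω * ω = 1 := by
  rw [mul_comm]; exact omega_mul_conj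

lemma omega_pow3 : ω * ω * ω = 1 := by
  rw [ω, ← Complex.exp_add, ← Complex.exp_add]
  have : 2 * Real.pi * Complex.I / 3 + 2 * Real.pi * Complex.I / 3 + 2 * Real.pi * Complex.I / 3
      = 2 * Real.pi * Complex.I := by ring
  rw [this, Complex.exp_two_pi_mul_I]

lemma conj_omega_pow3 :
    (starRingEnd ℂ) ω * (starRingEnd ℂ) ω * (starRingEnd ℂ) ω = 1 := by
  rw [← _root_.map_mul, ← _root_.map_mul, omega_pow3, _root_.map_one]

/-! #### Generic conjugation lemmas -/

variable {n : Type*} [Fintype n] [DecidableEq n]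

omit [DecidableEq n] in
lemma cj_add (U W A B : Matrix n n ℂ) : U * (A + B) * W = U * A * W + U * B * W := by
  rw [Matrix.mul_add, Matrix.add_mul]

omit [DecidableEq n] in
lemma cj_smul (U W A : Matrix n n ℂ) (c : ℂ) : U * (c • A) * W = c • (U * A * W) := by
  rw [Matrix.mul_smul, Matrix.smul_mul]

omit [DecidableEq n] in
lemma cj_sum {ι : Type*} (s : Finset ι) (U W : Matrix n n ℂ) (A : ι → Matrix n n ℂ) :
    U * (∑ i ∈ s, A i) * W = ∑ i ∈ s, U * A i * W := by
  rw [Finset.mul_sum, Finset.sum_mul]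

omit [DecidableEq n] in
lemma cj_ct (V M N : Matrix n n ℂ) (h : V * M * Vᴴ = N) : V * Mᴴ * Vᴴ = Nᴴ := by
  have := congrArg Matrix.conjTranspose h
  rw [Matrix.conjTranspose_mul, Matrix.conjTranspose_mul, Matrix.conjTranspose_conjTranspose]
    at this
  rw [← this, Matrix.mul_assoc]

/-! #### Kronecker lemmas -/

lemma kron_conjT (A B : Matrix (Fin 3) (Fin 3) ℂ) : (A ⊗ₖ B)ᴴ = Aᴴ ⊗ₖ Bᴴ := by
  ext ⟨p, q⟩ ⟨r, s⟩
  simp [Matrix.conjTranspose_apply, Matrix.kroneckerMap_apply]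

lemma kron_conj (V A B : Matrix (Fin 3) (Fin 3) ℂ) :
    (V ⊗ₖ V) * (A ⊗ₖ B) * (V ⊗ₖ V)ᴴ = (V * A * Vᴴ) ⊗ₖ (V * B * Vᴴ) := by
  rw [kron_conjT, Matrix.mul_kronecker_mul, Matrix.mul_kronecker_mul]

lemma kron_phase (V A B : Matrix (Fin 3) (Fin 3) ℂ) (φ ψ : ℂ)
    (hA : V * A * Vᴴ = φ • A) (hB : V * B * Vᴴ = ψ • B) (h : φ * ψ = 1) :
    (V ⊗ₖ V) * (A ⊗ₖ B) * (V ⊗ₖ V)ᴴ = A ⊗ₖ B := by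
  rw [kron_conj, hA, hB, Matrix.smul_kronecker, Matrix.kronecker_smul, smul_smul, h, one_smul]

def Estd (a c : Fin 3) : Matrix (Fin 3) (Fin 3) ℂ := Matrix.single a c 1

lemma kron_decomp (K : Matrix (Fin 3 × Fin 3) (Fin 3 × Fin 3) ℂ) :
    K = ∑ a : Fin 3, ∑ b : Fin 3, ∑ c : Fin 3, ∑ d : Fin 3,
      K (a, b) (c, d) • (Estd a c ⊗ₖ Estd b d) := by
  ext ⟨p, q⟩ ⟨r, s⟩
  simp [Matrix.sum_apply, Matrix.kroneckerMap_apply, Estd, Matrix.single_apply,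
    Finset.sum_ite_eq, mul_ite, ite_and]

/-! #### piMat machinery -/

def piMat (L : ℕ) (A : Fin L → Matrix (Fin 3) (Fin 3) ℂ) :
    Matrix (Fin L → Fin 3) (Fin L → Fin 3) ℂ :=
  fun f g => ∏ j, A j (f j) (g j)

lemma piMat_mul (L : ℕ) (A B : Fin L → Matrix (Fin 3) (Fin 3) ℂ) :
    piMat L A * piMat L B = piMat L (fun j => A j * B j) := by
  ext f g
  simp only [piMat, Matrix.mul_apply, ← Finset.prod_mul_distrib]
  rw [Finset.prod_univ_sum]
  simp [Fintype.piFinset_univ]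

lemma piMat_conjT (L : ℕ) (A : Fin L → Matrix (Fin 3) (Fin 3) ℂ) :
    (piMat L A)ᴴ = piMat L (fun j => (A j)ᴴ) := by
  ext f g
  simp [piMat, Matrix.conjTranspose_apply, map_prod]

lemma kronPow_eq (L : ℕ) (V : Matrix (Fin 3) (Fin 3) ℂ) :
    kronPow L V = piMat L (fun _ => V) := rfl

lemma conj_piMat (L : ℕ) (V : Matrix (Fin 3) (Fin 3) ℂ)
    (A : Fin L → Matrix (Fin 3) (Fin 3) ℂ) :
    kronPow L V * piMat L A * (kronPow L V)ᴴ = piMat L (fun j => V * A j * Vᴴ) := by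
  rw [kronPow_eq, piMat_conjT, piMat_mul, piMat_mul]

lemma nextSite_ne {L : ℕ} (hL : 2 ≤ L) (i : Fin L) : nextSite i ≠ i := by
  intro hEq
  have h1 : ((i : ℕ) + 1) % L = i := congrArg Fin.val hEq
  have h2 : (i : ℕ) < L := i.isLt
  rcases Nat.lt_or_ge ((i : ℕ) + 1) L with h | h
  · rw [Nat.mod_eq_of_lt h] at h1; omega
  · have : (i : ℕ) + 1 = L := by omega
    rw [this, Nat.mod_self] at h1; omega

lemma embed1_eq (L : ℕ) (M : Matrix (Fin 3) (Fin 3) ℂ) (i : Fin L) :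
    embed1 L M i = piMat L (fun j => if j = i then M else 1) := by
  ext f g
  rw [piMat, embed1, Finset.prod_eq_mul_prod_diff_singleton_of_mem (Finset.mem_univ i)
    (fun j => (if j = i then M else 1) (f j) (g j))]
  simp only [if_pos rfl]
  congr 1
  refine Finset.prod_congr rfl fun j hj => ?_
  rw [Finset.mem_sdiff, Finset.mem_singleton] at hj
  rw [if_neg hj.2, Matrix.one_apply]

lemma embed2_eq (L : ℕ) (hL : 2 ≤ L) (A B : Matrix (Fin 3) (Fin 3) ℂ) (i : Fin L) :
    embed2 L (A ⊗ₖ B) i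
      = piMat L (fun j => if j = i then A else if j = nextSite i then B else 1) := by
  have hne := nextSite_ne hL i
  ext f g
  rw [piMat, embed2, Finset.prod_eq_mul_prod_diff_singleton_of_mem (Finset.mem_univ i)
    (fun j => (if j = i then A else if j = nextSite i then B else 1) (f j) (g j))]
  have hmem : nextSite i ∈ Finset.univ \ ({i} : Finset (Fin L)) := by
    simp [hne]
  rw [Finset.prod_eq_mul_prod_diff_singleton_of_mem hmem
    (fun j => (if j = i then A else if j = nextSite i then B else 1) (f j) (g j))]
  simp only [if_pos rfl, if_neg hne]
  have hset : (Finset.univ \ ({i} : Finset (Fin L))) \ {nextSite i}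
      = Finset.univ \ {i, nextSite i} := by
    ext j; simp [and_comm]
  rw [hset]
  rw [show (A ⊗ₖ B) (f i, f (nextSite i)) (g i, g (nextSite i))
      = A (f i) (g i) * B (f (nextSite i)) (g (nextSite i)) from rfl]
  rw [mul_assoc]
  congr 1
  congr 1
  refine Finset.prod_congr rfl fun j hj => ?_
  rw [Finset.mem_sdiff, Finset.mem_insert, Finset.mem_singleton] at hj
  push_neg at hj
  rw [if_neg hj.2.1, if_neg hj.2.2, Matrix.one_apply]

lemma conj_embed1 (L : ℕ) (V M : Matrix (Fin 3) (Fin 3) ℂ) (hV : V * Vᴴ = 1) (i : Fin L) :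
    kronPow L V * embed1 L M i * (kronPow L V)ᴴ = embed1 L (V * M * Vᴴ) i := by
  rw [embed1_eq, embed1_eq, conj_piMat]
  refine congrArg (piMat L) ?_
  funext j
  by_cases hj : j = i
  · simp [hj]
  · simp [hj, hV]

lemma conj_embed2_kron (L : ℕ) (hL : 2 ≤ L) (V A B : Matrix (Fin 3) (Fin 3) ℂ)
    (hV : V * Vᴴ = 1) (i : Fin L) :
    kronPow L V * embed2 L (A ⊗ₖ B) i * (kronPow L V)ᴴ
      = embed2 L ((V * A * Vᴴ) ⊗ₖ (V * B * Vᴴ)) i := by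
  rw [embed2_eq L hL, embed2_eq L hL, conj_piMat]
  refine congrArg (piMat L) ?_
  funext j
  by_cases hj : j = i
  · simp [hj]
  · by_cases hj' : j = nextSite i
    · simp [hj, hj']
    · simp [hj, hj', hV]

lemma embed2_smul (L : ℕ) (K : Matrix (Fin 3 × Fin 3) (Fin 3 × Fin 3) ℂ) (c : ℂ) (i : Fin L) :
    embed2 L (c • K) i = c • embed2 L K i := by
  ext f g
  simp only [embed2, Matrix.smul_apply, smul_eq_mul]
  ring

lemma embed2_sum (L : ℕ) {ι : Type*} (s : Finset ι)
    (K : ι → Matrix (Fin 3 × Fin 3) (Fin 3 × Fin 3) ℂ) (i : Fin L) :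
    embed2 L (∑ x ∈ s, K x) i = ∑ x ∈ s, embed2 L (K x) i := by
  ext f g
  simp [embed2, Matrix.sum_apply, Finset.sum_mul]

lemma conj_embed2 (L : ℕ) (hL : 2 ≤ L) (V : Matrix (Fin 3) (Fin 3) ℂ)
    (K : Matrix (Fin 3 × Fin 3) (Fin 3 × Fin 3) ℂ) (hV : V * Vᴴ = 1) (i : Fin L) :
    kronPow L V * embed2 L K i * (kronPow L V)ᴴ
      = embed2 L ((V ⊗ₖ V) * K * (V ⊗ₖ V)ᴴ) i := by
  conv_lhs => rw [kron_decomp K]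
  conv_rhs => rw [kron_decomp K]
  simp only [embed2_sum, embed2_smul, cj_sum, cj_smul, kron_conj,
    conj_embed2_kron L hL _ _ _ hV]

end Aux

section Concrete

/-- A tactic-friendly form of `Vaᴴ`. -/
lemma VaH_eq : Vaᴴ = !![(starRingEnd ℂ) ω, 0, 0; 0, 1, 0; 0, 0, ω] := by
  ext i j
  fin_cases i <;> fin_cases j <;>
    simp [Va, Matrix.conjTranspose_apply, Matrix.vecHead, Matrix.vecTail]

lemma VxH_eq : Vxᴴ = Vx := by
  ext i j
  fin_cases i <;> fin_cases j <;>
    simp [Vx, Matrix.conjTranspose_apply, Matrix.vecHead, Matrix.vecTail]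

lemma Va_unit : Va * Vaᴴ = 1 := by
  rw [VaH_eq]
  ext i j
  fin_cases i <;> fin_cases j <;>
    simp [Va, Matrix.mul_apply, Fin.sum_univ_three, Matrix.vecHead, Matrix.vecTail, Matrix.one_apply, omega_mul_conj,
      conj_mul_omega]

lemma Vx_unit : Vx * Vxᴴ = 1 := by
  rw [VxH_eq]
  ext i j
  fin_cases i <;> fin_cases j <;>
    simp [Vx, Matrix.mul_apply, Fin.sum_univ_three, Matrix.vecHead, Matrix.vecTail, Matrix.one_apply]

lemma Va_Sz2 : Va * (Sz * Sz) * Vaᴴ = Sz * Sz := by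
  rw [VaH_eq]
  ext i j
  fin_cases i <;> fin_cases j <;>
    simp [Va, Sz, Matrix.mul_apply, Fin.sum_univ_three, Matrix.vecHead, Matrix.vecTail, omega_mul_conj, conj_mul_omega]

lemma Va_Sp2 : Va * (Sp * Sp) * Vaᴴ = (ω * ω) • (Sp * Sp) := by
  rw [VaH_eq, Sp_eq]
  ext i j
  fin_cases i <;> fin_cases j <;>
    simp [Va, Matrix.mul_apply, Fin.sum_univ_three, Matrix.vecHead, Matrix.vecTail, Matrix.smul_apply] <;> ring

lemma Va_Sm2 : Va * (Sm * Sm) * Vaᴴ = ((starRingEnd ℂ) ω * (starRingEnd ℂ) ω) • (Sm * Sm) := by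
  rw [VaH_eq, Sm_eq]
  ext i j
  fin_cases i <;> fin_cases j <;>
    simp [Va, Matrix.mul_apply, Fin.sum_univ_three, Matrix.vecHead, Matrix.vecTail, Matrix.smul_apply] <;> ring

lemma Va_SpSz : Va * (Sp * Sz) * Vaᴴ = ω • (Sp * Sz) := by
  rw [VaH_eq, Sp_eq]
  ext i j
  fin_cases i <;> fin_cases j <;>
    simp [Va, Sz, Matrix.mul_apply, Fin.sum_univ_three, Matrix.vecHead, Matrix.vecTail, Matrix.smul_apply] <;> ring

lemma Va_SmSz : Va * (Sm * Sz) * Vaᴴ = (starRingEnd ℂ) ω • (Sm * Sz) := by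
  rw [VaH_eq, Sm_eq]
  ext i j
  fin_cases i <;> fin_cases j <;>
    simp [Va, Sz, Matrix.mul_apply, Fin.sum_univ_three, Matrix.vecHead, Matrix.vecTail, Matrix.smul_apply] <;> ring

lemma Vx_Sz : Vx * Sz * Vxᴴ = (-1 : ℂ) • Sz := by
  rw [VxH_eq]
  ext i j
  fin_cases i <;> fin_cases j <;>
    simp [Vx, Sz, Matrix.mul_apply, Fin.sum_univ_three, Matrix.vecHead, Matrix.vecTail, Matrix.smul_apply]

lemma Vx_Sz2 : Vx * (Sz * Sz) * Vxᴴ = Sz * Sz := by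
  rw [VxH_eq]
  ext i j
  fin_cases i <;> fin_cases j <;>
    simp [Vx, Sz, Matrix.mul_apply, Fin.sum_univ_three, Matrix.vecHead, Matrix.vecTail]

lemma Vx_Sp2 : Vx * (Sp * Sp) * Vxᴴ = Sm * Sm := by
  rw [VxH_eq, Sp_eq, Sm_eq]
  ext i j
  fin_cases i <;> fin_cases j <;>
    simp [Vx, Matrix.mul_apply, Fin.sum_univ_three, Matrix.vecHead, Matrix.vecTail]

lemma Vx_Sm2 : Vx * (Sm * Sm) * Vxᴴ = Sp * Sp := by
  rw [VxH_eq, Sp_eq, Sm_eq]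
  ext i j
  fin_cases i <;> fin_cases j <;>
    simp [Vx, Matrix.mul_apply, Fin.sum_univ_three, Matrix.vecHead, Matrix.vecTail]

lemma Vx_SpSz : Vx * (Sp * Sz) * Vxᴴ = Sm * Sz := by
  rw [VxH_eq, Sp_eq, Sm_eq]
  ext i j
  fin_cases i <;> fin_cases j <;>
    simp [Vx, Sz, Matrix.mul_apply, Fin.sum_univ_three, Matrix.vecHead, Matrix.vecTail]

lemma Vx_SmSz : Vx * (Sm * Sz) * Vxᴴ = Sp * Sz := by
  rw [VxH_eq, Sp_eq, Sm_eq]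
  ext i j
  fin_cases i <;> fin_cases j <;>
    simp [Vx, Sz, Matrix.mul_apply, Fin.sum_univ_three, Matrix.vecHead, Matrix.vecTail]

end Concrete

section Invariance

lemma cj_herm {n : Type*} [Fintype n] (V T : Matrix n n ℂ) (h : V * T * Vᴴ = T) :
    V * (T + Tᴴ) * Vᴴ = T + Tᴴ := by
  rw [cj_add, h, cj_ct V T T h]

lemma phase_aa : (ω * ω) * ((starRingEnd ℂ) ω * (starRingEnd ℂ) ω) = 1 := by
  have := omega_mul_conj
  calc (ω * ω) * ((starRingEnd ℂ) ω * (starRingEnd ℂ) ω)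
      = (ω * (starRingEnd ℂ) ω) * (ω * (starRingEnd ℂ) ω) := by ring
    _ = 1 := by rw [omega_mul_conj, mul_one]

lemma phase_aa' : ((starRingEnd ℂ) ω * (starRingEnd ℂ) ω) * (ω * ω) = 1 := by
  rw [mul_comm]; exact phase_aa

lemma phase_bb' : (starRingEnd ℂ) ω * ω = 1 := conj_mul_omega

lemma phase_ca : (ω * ω) * ω = 1 := omega_pow3

lemma phase_ca' : ((starRingEnd ℂ) ω * (starRingEnd ℂ) ω) * (starRingEnd ℂ) ω = 1 :=
  conj_omega_pow3

lemma Va_K2 : (Va ⊗ₖ Va) * (Sz ⊗ₖ Sz) * (Va ⊗ₖ Va)ᴴ = Sz ⊗ₖ Sz := by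
  have hSz : Va * Sz * Vaᴴ = (1 : ℂ) • Sz := by
    rw [one_smul]
    rw [VaH_eq]
    ext i j
    fin_cases i <;> fin_cases j <;>
      simp [Va, Sz, Matrix.mul_apply, Fin.sum_univ_three, Matrix.vecHead, Matrix.vecTail,
        omega_mul_conj, conj_mul_omega]
  exact kron_phase Va Sz Sz 1 1 hSz hSz (by norm_num)

lemma Va_KTa : (Va ⊗ₖ Va) * Ta * (Va ⊗ₖ Va)ᴴ = Ta := by
  rw [Ta, cj_add,
    kron_phase Va _ _ _ _ Va_Sp2 Va_Sm2 phase_aa,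
    kron_phase Va _ _ _ _ Va_Sm2 Va_Sp2 phase_aa']

lemma Va_KTb : (Va ⊗ₖ Va) * Tb * (Va ⊗ₖ Va)ᴴ = Tb := by
  rw [Tb, cj_add,
    kron_phase Va _ _ _ _ Va_SpSz Va_SmSz omega_mul_conj,
    kron_phase Va _ _ _ _ Va_SmSz Va_SpSz phase_bb']

lemma Va_KTc : (Va ⊗ₖ Va) * Tc * (Va ⊗ₖ Va)ᴴ = Tc := by
  rw [Tc, cj_add,
    kron_phase Va _ _ _ _ Va_Sp2 Va_SpSz phase_ca,
    kron_phase Va _ _ _ _ Va_Sm2 Va_SmSz phase_ca']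

lemma Vx_K2 : (Vx ⊗ₖ Vx) * (Sz ⊗ₖ Sz) * (Vx ⊗ₖ Vx)ᴴ = Sz ⊗ₖ Sz :=
  kron_phase Vx Sz Sz (-1) (-1) Vx_Sz Vx_Sz (by norm_num)

lemma Vx_KTa : (Vx ⊗ₖ Vx) * Ta * (Vx ⊗ₖ Vx)ᴴ = Ta := by
  rw [Ta, cj_add, kron_conj, kron_conj, Vx_Sp2, Vx_Sm2]
  exact add_comm _ _

lemma Vx_KTb : (Vx ⊗ₖ Vx) * Tb * (Vx ⊗ₖ Vx)ᴴ = Tb := by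
  rw [Tb, cj_add, kron_conj, kron_conj, Vx_SpSz, Vx_SmSz]
  exact add_comm _ _

lemma Vx_KTc : (Vx ⊗ₖ Vx) * Tc * (Vx ⊗ₖ Vx)ᴴ = Tc := by
  rw [Tc, cj_add, kron_conj, kron_conj, Vx_Sp2, Vx_Sm2, Vx_SpSz, Vx_SmSz]
  exact add_comm _ _

lemma conj_Hmodel (L : ℕ) (hL : 2 ≤ L) (lam kap Δt a b c : ℝ) (h J : Fin L → ℝ)
    (V : Matrix (Fin 3) (Fin 3) ℂ) (hV : V * Vᴴ = 1)
    (h1 : V * (Sz * Sz) * Vᴴ = Sz * Sz)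
    (h2 : (V ⊗ₖ V) * (Sz ⊗ₖ Sz) * (V ⊗ₖ V)ᴴ = Sz ⊗ₖ Sz)
    (h3 : (V ⊗ₖ V) * Ta * (V ⊗ₖ V)ᴴ = Ta)
    (h4 : (V ⊗ₖ V) * Tb * (V ⊗ₖ V)ᴴ = Tb)
    (h5 : (V ⊗ₖ V) * Tc * (V ⊗ₖ V)ᴴ = Tc) :
    kronPow L V * Hmodel L lam kap Δt a b c h J * (kronPow L V)ᴴ
      = Hmodel L lam kap Δt a b c h J := by
  have e1 : ∀ i : Fin L, kronPow L V * embed1 L (Sz * Sz) i * (kronPow L V)ᴴ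
      = embed1 L (Sz * Sz) i := fun i => by
    rw [conj_embed1 L V _ hV, h1]
  have e2 : ∀ i : Fin L, kronPow L V * embed2 L (Sz ⊗ₖ Sz) i * (kronPow L V)ᴴ
      = embed2 L (Sz ⊗ₖ Sz) i := fun i => by
    rw [conj_embed2 L hL V _ hV, h2]
  have e3 : ∀ i : Fin L, kronPow L V * embed2 L (Ta + Taᴴ) i * (kronPow L V)ᴴ
      = embed2 L (Ta + Taᴴ) i := fun i => by
    rw [conj_embed2 L hL V _ hV, cj_herm _ _ h3]
  have e4 : ∀ i : Fin L, kronPow L V * embed2 L (Tb + Tbᴴ) i * (kronPow L V)ᴴ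
      = embed2 L (Tb + Tbᴴ) i := fun i => by
    rw [conj_embed2 L hL V _ hV, cj_herm _ _ h4]
  have e5 : ∀ i : Fin L, kronPow L V * embed2 L (Tc + Tcᴴ) i * (kronPow L V)ᴴ
      = embed2 L (Tc + Tcᴴ) i := fun i => by
    rw [conj_embed2 L hL V _ hV, cj_herm _ _ h5]
  simp only [Hmodel, cj_add, cj_smul, cj_sum, e1, e2, e3, e4, e5]

end Invariance

/-- for every `L ≥ 2`, all real parameters `λ, κ, Δ_t, a, b, c` and all
real couplings `h_i`, `J_i`, the Hamiltonian `H(λ,κ)` satisfies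
`U(g) H(λ,κ) U(g)* = H(λ,κ)` for `U(g) = V(g)^{⊗L}`, `g = a, x` (and hence for all
`g ∈ S₃`). -/
theorem Hmodel_S3_invariant (L : ℕ) (hL : 2 ≤ L)
    (lam kap Δt a b c : ℝ) (h J : Fin L → ℝ) :
    kronPow L Va * Hmodel L lam kap Δt a b c h J * (kronPow L Va)ᴴ
        = Hmodel L lam kap Δt a b c h J
    ∧ kronPow L Vx * Hmodel L lam kap Δt a b c h J * (kronPow L Vx)ᴴ
        = Hmodel L lam kap Δt a b c h J := by
  exact ⟨conj_Hmodel L hL lam kap Δt a b c h J Va Va_unit Va_Sz2 Va_K2 Va_KTa Va_KTb Va_KTc,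
    conj_Hmodel L hL lam kap Δt a b c h J Vx Vx_unit Vx_Sz2 Vx_K2 Vx_KTa Vx_KTb Vx_KTc⟩
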